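/- Both formal power series F_3(q) - q^9 and F_4(q) - q^{16} + q^{18} + q^{30} - q^{31} are of Bloch–Pólya type, i.e., all of their coefficients lie in {-1, 0, 1}. -/

import Mathlib

/-- The finite q-Pochhammer symbol `(q;q)_m = ∏_{i=1}^{m} (1 - q^i)` as a polynomial in `ℤ[q]`. -/
noncomputable def qPoch (m : ℕ) : Polynomial ℤ :=
  ∏ i ∈ Finset.range m, (1 - Polynomial.X ^ (i + 1))

/-- The infinite product `(q^a;q)_∞ = ∏_{i ≥ 0} (1 - q^{a+i})` in `ℤ[[q]]` (for `a ≥ 1`),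
defined coefficientwise via sufficiently large partial products.
In particular, `pochInf 1 = (q;q)_∞`. -/
noncomputable def pochInf (a : ℕ) : PowerSeries ℤ :=
  PowerSeries.mk fun n =>
    (∏ i ∈ Finset.range (n + 1), (1 - Polynomial.X ^ (a + i)) : Polynomial ℤ).coeff n

/-- The formal power series `F_k(q) = Σ_{j ≥ 0} q^{kj} (q;q)_j ∈ ℤ[[q]]` (for `k ≥ 1`),
defined coefficientwise: the term with index `j` is divisible by `q^{kj}`,
so only terms with `j ≤ n` contribute to the coefficient of `q^n`. -/
noncomputable def Fser (k : ℕ) : PowerSeries ℤ :=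
  PowerSeries.mk fun n =>
    (∑ j ∈ Finset.range (n + 1), Polynomial.X ^ (k * j) * qPoch j : Polynomial ℤ).coeff n

namespace BP

open Polynomial

noncomputable def pp (m j : ℕ) : Polynomial ℤ :=
  ∏ i ∈ Finset.range j, (1 - X ^ (m + i))

noncomputable def Spoly (m b M : ℕ) : Polynomial ℤ :=
  ∑ j ∈ Finset.range (M + 1), X ^ (b * j) * pp m j

noncomputable def cc (m b n : ℕ) : ℤ := (Spoly m b n).coeff n

lemma coeff_Xpow_mul (e n : ℕ) (p : Polynomial ℤ) :
    (X ^ e * p).coeff n = if e ≤ n then p.coeff (n - e) else 0 := by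
  rw [mul_comm, Polynomial.coeff_mul_X_pow']

lemma pp_zero (m : ℕ) : pp m 0 = 1 := by simp [pp]

lemma pp_succ_left (m j : ℕ) : pp m (j + 1) = (1 - X ^ m) * pp (m + 1) j := by
  unfold pp
  rw [Finset.prod_range_succ' (fun i => (1 : Polynomial ℤ) - X ^ (m + i)) j]
  have h : (∏ i ∈ Finset.range j, ((1 : Polynomial ℤ) - X ^ (m + (i + 1))))
      = ∏ i ∈ Finset.range j, ((1 : Polynomial ℤ) - X ^ (m + 1 + i)) :=
    Finset.prod_congr rfl fun i _ => by rw [show m + (i + 1) = m + 1 + i from by ring]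
  rw [h]
  ring

lemma pp_succ_right (m j : ℕ) : pp m (j + 1) = pp m j * (1 - X ^ (m + j)) :=
  Finset.prod_range_succ _ _

lemma Spoly_succ (m b M : ℕ) :
    Spoly m b (M + 1) = Spoly m b M + X ^ (b * (M + 1)) * pp m (M + 1) :=
  Finset.sum_range_succ _ _

lemma Spoly_one (m b M : ℕ) :
    Spoly m b (M + 1) = 1 + X ^ b * Spoly (m + 1) b M - X ^ (b + m) * Spoly (m + 1) b M := by
  unfold Spoly
  rw [Finset.sum_range_succ' (fun j => X ^ (b * j) * pp m j) (M + 1)]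
  have h1 : ∀ j, X ^ (b * (j + 1)) * pp m (j + 1)
      = X ^ b * (X ^ (b * j) * pp (m + 1) j) - X ^ (b + m) * (X ^ (b * j) * pp (m + 1) j) := by
    intro j
    rw [pp_succ_left]
    ring
  rw [Finset.sum_congr rfl fun j _ => h1 j, Finset.sum_sub_distrib, ← Finset.mul_sum,
    ← Finset.mul_sum]
  simp [pp_zero]
  try ring

lemma Spoly_two (m b M : ℕ) :
    Spoly m b (M + 1) = 1 + X ^ b * Spoly m b M - X ^ (b + m) * Spoly m (b + 1) M := by
  unfold Spoly
  rw [Finset.sum_range_succ' (fun j => X ^ (b * j) * pp m j) (M + 1)]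
  have h1 : ∀ j, X ^ (b * (j + 1)) * pp m (j + 1)
      = X ^ b * (X ^ (b * j) * pp m j) - X ^ (b + m) * (X ^ ((b + 1) * j) * pp m j) := by
    intro j
    rw [pp_succ_right]
    ring
  rw [Finset.sum_congr rfl fun j _ => h1 j, Finset.sum_sub_distrib, ← Finset.mul_sum,
    ← Finset.mul_sum]
  simp [pp_zero]
  try ring

lemma coeff_Spoly_stab (m b : ℕ) (hb : 1 ≤ b) {n M : ℕ} (h : n ≤ M) :
    (Spoly m b M).coeff n = cc m b n := by
  induction M with
  | zero => interval_cases n; rfl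
  | succ M ih =>
    rcases Nat.lt_or_ge n (M + 1) with h' | h'
    · rw [Spoly_succ, Polynomial.coeff_add, coeff_Xpow_mul,
        if_neg (by nlinarith [Nat.one_le_iff_ne_zero.mp hb]), add_zero]
      exact ih (by omega)
    · have : n = M + 1 := by omega
      subst this; rfl

lemma Spoly_coeff_small (m b M n : ℕ) (hnb : n < b) :
    (Spoly m b M).coeff n = if n = 0 then 1 else 0 := by
  induction M with
  | zero =>
    simp [Spoly, pp_zero, Polynomial.coeff_one]
  | succ M ih =>
    rw [Spoly_succ, Polynomial.coeff_add, coeff_Xpow_mul, if_neg (by nlinarith), add_zero, ih]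

lemma cc_small (m b n : ℕ) (hnb : n < b) : cc m b n = if n = 0 then 1 else 0 :=
  Spoly_coeff_small m b n n hnb

lemma cc_rec1 (m b n : ℕ) (hb : 1 ≤ b) :
    cc m b n = (if n = 0 then 1 else 0) + (if b ≤ n then cc (m + 1) b (n - b) else 0)
      - (if b + m ≤ n then cc (m + 1) b (n - (b + m)) else 0) := by
  have hc : cc m b n = (Spoly m b (n + 1)).coeff n :=
    (coeff_Spoly_stab m b hb (Nat.le_succ n)).symm
  rw [hc, Spoly_one, Polynomial.coeff_sub, Polynomial.coeff_add, Polynomial.coeff_one,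
    coeff_Xpow_mul, coeff_Xpow_mul]
  congr 1
  · congr 1
    split_ifs with h
    · exact coeff_Spoly_stab (m + 1) b hb (by omega)
    · rfl
  · split_ifs with h
    · exact coeff_Spoly_stab (m + 1) b hb (by omega)
    · rfl

lemma cc_rec2 (m b n : ℕ) (hb : 1 ≤ b) :
    cc m b n = (if n = 0 then 1 else 0) + (if b ≤ n then cc m b (n - b) else 0)
      - (if b + m ≤ n then cc m (b + 1) (n - (b + m)) else 0) := by
  have hc : cc m b n = (Spoly m b (n + 1)).coeff n :=
    (coeff_Spoly_stab m b hb (Nat.le_succ n)).symm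
  rw [hc, Spoly_two, Polynomial.coeff_sub, Polynomial.coeff_add, Polynomial.coeff_one,
    coeff_Xpow_mul, coeff_Xpow_mul]
  congr 1
  · congr 1
    split_ifs with h
    · exact coeff_Spoly_stab m b hb (by omega)
    · rfl
  · split_ifs with h
    · exact coeff_Spoly_stab m (b + 1) (by omega) (by omega)
    · rfl

noncomputable def Acf (m n : ℕ) : ℤ := cc m m n

lemma A_rec (m n : ℕ) (hm : 1 ≤ m) :
    Acf m n = (if n = 0 then 1 else 0) + (if n = m then 1 else 0)
      - (if 3 * m + 1 ≤ n then Acf (m + 1) (n - (3 * m + 1)) else 0) := by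
  unfold Acf
  rw [cc_rec1 m m n hm]
  rcases Nat.lt_or_ge n m with h | h
  · rw [if_neg (show ¬ m ≤ n by omega), if_neg (show ¬ m + m ≤ n by omega),
      if_neg (show ¬ n = m by omega), if_neg (show ¬ 3 * m + 1 ≤ n by omega)]
  · rcases Nat.lt_or_ge n (2 * m) with h2 | h2
    · rw [if_pos (show m ≤ n from h), if_neg (show ¬ m + m ≤ n by omega),
        cc_small _ _ _ (by omega),
        if_congr (show n - m = 0 ↔ n = m by omega) rfl rfl,
        if_neg (show ¬ 3 * m + 1 ≤ n by omega)]
    · rw [if_pos (show m ≤ n from h), if_pos (show m + m ≤ n by omega),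
        cc_rec2 (m + 1) m (n - m) hm, if_neg (show ¬ n - m = 0 by omega),
        if_pos (show m ≤ n - m by omega),
        show n - m - m = n - (m + m) from by omega]
      rw [if_congr (show m + (m + 1) ≤ n - m ↔ 3 * m + 1 ≤ n by omega)
        (congrArg (cc (m + 1) (m + 1)) (show n - m - (m + (m + 1)) = n - (3 * m + 1) by omega)) rfl]
      rw [if_neg (show ¬ n = 0 by omega), if_neg (show ¬ n = m by omega)]
      ring
noncomputable def gA (m s n : ℕ) : ℤ := if s ≤ n then Acf m (n - s) else 0

lemma gA_zero (m s n : ℕ) (h : n < s) : gA m s n = 0 := if_neg (by omega)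

lemma gA_rec (m s n : ℕ) (hm : 1 ≤ m) :
    gA m s n = (if n = s then 1 else 0) + (if n = s + m then 1 else 0)
      - gA (m + 1) (s + (3 * m + 1)) n := by
  unfold gA
  by_cases hs : s ≤ n
  · rw [if_pos hs, A_rec _ _ hm,
      if_congr (show n - s = 0 ↔ n = s by omega) rfl rfl,
      if_congr (show n - s = m ↔ n = s + m by omega) rfl rfl,
      if_congr (show 3 * m + 1 ≤ n - s ↔ s + (3 * m + 1) ≤ n by omega)
        (congrArg (Acf (m + 1)) (show n - s - (3 * m + 1) = n - (s + (3 * m + 1)) by omega)) rfl]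
  · rw [if_neg hs, if_neg (show ¬ n = s by omega), if_neg (show ¬ n = s + m by omega),
      if_neg (show ¬ s + (3 * m + 1) ≤ n by omega)]
    ring

noncomputable def hC (b m s n : ℕ) : ℤ := if s ≤ n then cc m b (n - s) else 0

lemma hC_rec (b m s n : ℕ) (hb : 1 ≤ b) :
    hC b m s n = (if n = s then 1 else 0) + hC b (m + 1) (s + b) n - hC b (m + 1) (s + b + m) n := by
  unfold hC
  by_cases hs : s ≤ n
  · rw [if_pos hs, cc_rec1 _ _ _ hb,
      if_congr (show n - s = 0 ↔ n = s by omega) rfl rfl,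
      if_congr (show b ≤ n - s ↔ s + b ≤ n by omega)
        (congrArg (cc (m + 1) b) (show n - s - b = n - (s + b) by omega)) rfl,
      if_congr (show b + m ≤ n - s ↔ s + b + m ≤ n by omega)
        (congrArg (cc (m + 1) b) (show n - s - (b + m) = n - (s + b + m) by omega)) rfl]
  · rw [if_neg hs, if_neg (show ¬ n = s by omega), if_neg (show ¬ s + b ≤ n by omega),
      if_neg (show ¬ s + b + m ≤ n by omega)]
    ring

noncomputable def fm3 (m s n : ℕ) : ℤ := gA m s n - gA m (s + 1) n - gA m (s + 2) n + gA m (s + 3) n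

noncomputable def Pm (m s n : ℕ) : ℤ :=
  (if n = s then 1 else 0) - (if n = s + 1 then 1 else 0) - (if n = s + 2 then 1 else 0)
    + (if n = s + 3 then 1 else 0) + (if n = s + m then 1 else 0) - (if n = s + m + 1 then 1 else 0)
    - (if n = s + m + 2 then 1 else 0) + (if n = s + m + 3 then 1 else 0)

lemma fm3_zero (m s n : ℕ) (h : n < s) : fm3 m s n = 0 := by
  unfold fm3
  rw [gA_zero _ _ _ (by omega), gA_zero _ _ _ (by omega), gA_zero _ _ _ (by omega),
    gA_zero _ _ _ (by omega)]
  ring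

lemma fm3_rec (m s n : ℕ) (hm : 1 ≤ m) :
    fm3 m s n = Pm m s n - fm3 (m + 1) (s + (3 * m + 1)) n := by
  unfold fm3 Pm
  rw [gA_rec m s n hm, gA_rec m (s + 1) n hm, gA_rec m (s + 2) n hm, gA_rec m (s + 3) n hm,
    show s + 1 + (3 * m + 1) = s + (3 * m + 1) + 1 from by ring,
    show s + 2 + (3 * m + 1) = s + (3 * m + 1) + 2 from by ring,
    show s + 3 + (3 * m + 1) = s + (3 * m + 1) + 3 from by ring,
    show s + 1 + m = s + m + 1 from by ring,
    show s + 2 + m = s + m + 2 from by ring,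
    show s + 3 + m = s + m + 3 from by ring]
  ring

lemma Pm_mem (m s n : ℕ) (hm : 4 ≤ m) :
    Pm m s n = -1 ∨ Pm m s n = 0 ∨ Pm m s n = 1 := by
  unfold Pm
  split_ifs <;> omega

lemma Pm_zero (m s n : ℕ) (h : n < s ∨ s + m + 3 < n) : Pm m s n = 0 := by
  unfold Pm
  split_ifs <;> omega

lemma main3 : ∀ t m s n : ℕ, 4 ≤ m → n < s + t →
    fm3 m s n = -1 ∨ fm3 m s n = 0 ∨ fm3 m s n = 1 := by
  intro t
  induction t with
  | zero => intro m s n hm h; exact Or.inr (Or.inl (fm3_zero _ _ _ (by omega)))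
  | succ t ih =>
    intro m s n hm h
    by_cases hs : n < s
    · exact Or.inr (Or.inl (fm3_zero _ _ _ hs))
    rcases le_or_gt n (s + m + 3) with h1 | h1
    · rw [fm3_rec _ _ _ (by omega), fm3_zero _ _ _ (show n < s + (3 * m + 1) by omega)]
      have := Pm_mem m s n hm
      omega
    · rw [fm3_rec _ _ _ (by omega), Pm_zero _ _ _ (Or.inr h1)]
      have := ih (m + 1) (s + (3 * m + 1)) n (by omega) (by omega)
      omega

noncomputable def fq4 (m s n : ℕ) : ℤ :=
  gA m s n - gA m (s + 1) n - gA m (s + 2) n + gA m (s + 4) n + gA m (s + 5) n - gA m (s + 6) n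

noncomputable def Qm (m s n : ℕ) : ℤ :=
  (if n = s then 1 else 0) - (if n = s + 1 then 1 else 0) - (if n = s + 2 then 1 else 0)
    + (if n = s + 4 then 1 else 0) + (if n = s + 5 then 1 else 0) - (if n = s + 6 then 1 else 0)
    + (if n = s + m then 1 else 0) - (if n = s + m + 1 then 1 else 0)
    - (if n = s + m + 2 then 1 else 0) + (if n = s + m + 4 then 1 else 0)
    + (if n = s + m + 5 then 1 else 0) - (if n = s + m + 6 then 1 else 0)

lemma fq4_zero (m s n : ℕ) (h : n < s) : fq4 m s n = 0 := by
  unfold fq4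
  rw [gA_zero _ _ _ (by omega), gA_zero _ _ _ (by omega), gA_zero _ _ _ (by omega),
    gA_zero _ _ _ (by omega), gA_zero _ _ _ (by omega), gA_zero _ _ _ (by omega)]
  ring

lemma fq4_rec (m s n : ℕ) (hm : 1 ≤ m) :
    fq4 m s n = Qm m s n - fq4 (m + 1) (s + (3 * m + 1)) n := by
  unfold fq4 Qm
  rw [gA_rec m s n hm, gA_rec m (s + 1) n hm, gA_rec m (s + 2) n hm, gA_rec m (s + 4) n hm,
    gA_rec m (s + 5) n hm, gA_rec m (s + 6) n hm,
    show s + 1 + (3 * m + 1) = s + (3 * m + 1) + 1 from by ring,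
    show s + 2 + (3 * m + 1) = s + (3 * m + 1) + 2 from by ring,
    show s + 4 + (3 * m + 1) = s + (3 * m + 1) + 4 from by ring,
    show s + 5 + (3 * m + 1) = s + (3 * m + 1) + 5 from by ring,
    show s + 6 + (3 * m + 1) = s + (3 * m + 1) + 6 from by ring,
    show s + 1 + m = s + m + 1 from by ring,
    show s + 2 + m = s + m + 2 from by ring,
    show s + 4 + m = s + m + 4 from by ring,
    show s + 5 + m = s + m + 5 from by ring,
    show s + 6 + m = s + m + 6 from by ring]
  ring

noncomputable def R6 (s n : ℕ) : ℤ :=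
  (if n = s then 1 else 0) - (if n = s + 1 then 1 else 0) - (if n = s + 2 then 1 else 0)
    + (if n = s + 4 then 1 else 0) + (if n = s + 5 then 1 else 0) - (if n = s + 6 then 1 else 0)

lemma R6_mem (s n : ℕ) : R6 s n = -1 ∨ R6 s n = 0 ∨ R6 s n = 1 := by
  unfold R6
  split_ifs <;> omega

lemma R6_zero (s n : ℕ) (h : n < s ∨ s + 6 < n) : R6 s n = 0 := by
  unfold R6
  split_ifs <;> omega

lemma Qm_eq (m s n : ℕ) : Qm m s n = R6 s n + R6 (s + m) n := by
  unfold Qm R6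
  rw [show s + m + 1 = s + m + 1 from rfl]
  ring

lemma Qm_mem (m s n : ℕ) (hm : 7 ≤ m) :
    Qm m s n = -1 ∨ Qm m s n = 0 ∨ Qm m s n = 1 := by
  rw [Qm_eq]
  rcases le_or_gt n (s + 6) with h | h
  · rw [R6_zero (s + m) n (Or.inl (by omega))]
    have := R6_mem s n
    omega
  · rw [R6_zero s n (Or.inr h)]
    have := R6_mem (s + m) n
    omega

lemma Qm_zero (m s n : ℕ) (h : n < s ∨ s + m + 6 < n) : Qm m s n = 0 := by
  rw [Qm_eq, R6_zero s n (by omega), R6_zero (s + m) n (by omega)]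
  ring

lemma main4 : ∀ t m s n : ℕ, 7 ≤ m → n < s + t →
    fq4 m s n = -1 ∨ fq4 m s n = 0 ∨ fq4 m s n = 1 := by
  intro t
  induction t with
  | zero => intro m s n hm h; exact Or.inr (Or.inl (fq4_zero _ _ _ (by omega)))
  | succ t ih =>
    intro m s n hm h
    by_cases hs : n < s
    · exact Or.inr (Or.inl (fq4_zero _ _ _ hs))
    rcases le_or_gt n (s + m + 6) with h1 | h1
    · rw [fq4_rec _ _ _ (by omega), fq4_zero _ _ _ (show n < s + (3 * m + 1) by omega)]
      have := Qm_mem m s n hm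
      omega
    · rw [fq4_rec _ _ _ (by omega), Qm_zero _ _ _ (Or.inr h1)]
      have := ih (m + 1) (s + (3 * m + 1)) n (by omega) (by omega)
      omega
lemma qPoch_eq (j : ℕ) : qPoch j = pp 1 j :=
  Finset.prod_congr rfl fun i _ => by rw [add_comm]

lemma Fser_coeff (k n : ℕ) : PowerSeries.coeff n (Fser k) = cc 1 k n := by
  rw [Fser, PowerSeries.coeff_mk]
  unfold cc Spoly
  congr 1
  exact Finset.sum_congr rfl fun j _ => by rw [qPoch_eq]

lemma hC_start (b n : ℕ) : cc 1 b n = hC b 1 0 n := by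
  unfold hC
  rw [if_pos (Nat.zero_le n), Nat.sub_zero]

lemma hC_diag (b s n : ℕ) : hC b b s n = gA b s n := rfl

lemma cc13 (n : ℕ) : cc 1 3 n = (if n = 0 then 1 else 0) + (if n = 3 then 1 else 0)
    - (if n = 4 then 1 else 0) + fm3 3 6 n := by
  rw [hC_start 3 n, hC_rec 3 1 0 n (by norm_num)]
  norm_num
  rw [hC_rec 3 2 3 n (by norm_num), hC_rec 3 2 4 n (by norm_num)]
  norm_num
  rw [hC_diag 3 6 n, hC_diag 3 8 n, hC_diag 3 7 n, hC_diag 3 9 n]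
  unfold fm3
  norm_num
  ring

lemma cc14 (n : ℕ) : cc 1 4 n = (if n = 0 then 1 else 0) + (if n = 4 then 1 else 0)
    - (if n = 5 then 1 else 0) + (if n = 8 then 1 else 0) - (if n = 9 then 1 else 0)
    - (if n = 10 then 1 else 0) + (if n = 11 then 1 else 0) + fq4 4 12 n := by
  rw [hC_start 4 n, hC_rec 4 1 0 n (by norm_num)]
  norm_num
  rw [hC_rec 4 2 4 n (by norm_num), hC_rec 4 2 5 n (by norm_num)]
  norm_num
  rw [hC_rec 4 3 8 n (by norm_num), hC_rec 4 3 10 n (by norm_num),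
    hC_rec 4 3 9 n (by norm_num), hC_rec 4 3 11 n (by norm_num)]
  norm_num
  rw [hC_diag 4 12 n, hC_diag 4 15 n, hC_diag 4 14 n, hC_diag 4 17 n, hC_diag 4 13 n,
    hC_diag 4 16 n, hC_diag 4 18 n]
  unfold fq4
  norm_num
  ring

lemma Qm6_mem (s n : ℕ) : Qm 6 s n = -1 ∨ Qm 6 s n = 0 ∨ Qm 6 s n = 1 := by
  rw [Qm_eq]
  rcases lt_trichotomy n (s + 6) with h | h | h
  · rw [R6_zero (s + 6) n (Or.inl h)]
    have := R6_mem s n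
    omega
  · subst h
    rw [show R6 s (s + 6) = -1 by
        unfold R6
        rw [if_neg (by omega), if_neg (by omega), if_neg (by omega), if_neg (by omega),
          if_neg (by omega), if_pos rfl]
        ring,
      show R6 (s + 6) (s + 6) = 1 by
        unfold R6
        rw [if_pos rfl, if_neg (by omega), if_neg (by omega), if_neg (by omega),
          if_neg (by omega), if_neg (by omega)]
        ring]
    omega
  · rw [R6_zero s n (Or.inr h)]
    have := R6_mem (s + 6) n
    omega

end BP


theorem F3_F4_blochPolya :
    (∀ n : ℕ, PowerSeries.coeff n
        (Fser 3 - (PowerSeries.X : PowerSeries ℤ) ^ 9) ∈ ({-1, 0, 1} : Set ℤ)) ∧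
      ∀ n : ℕ, PowerSeries.coeff n
        (Fser 4 - (PowerSeries.X : PowerSeries ℤ) ^ 16 + (PowerSeries.X : PowerSeries ℤ) ^ 18
          + (PowerSeries.X : PowerSeries ℤ) ^ 30 - (PowerSeries.X : PowerSeries ℤ) ^ 31)
        ∈ ({-1, 0, 1} : Set ℤ) := by
  open BP in
  constructor
  · intro n
    have hcoeff : PowerSeries.coeff n (Fser 3 - (PowerSeries.X : PowerSeries ℤ) ^ 9)
        = cc 1 3 n - (if n = 9 then 1 else 0) := by
      rw [map_sub, Fser_coeff, PowerSeries.coeff_X_pow]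
    simp only [Set.mem_insert_iff, Set.mem_singleton_iff]
    rw [hcoeff, cc13 n, fm3_rec 3 6 n (by norm_num),
      show (6:ℕ) + (3*3+1) = 16 from rfl, show fm3 (3+1) 16 n = fm3 4 16 n from rfl]
    rcases le_or_gt n 15 with h | h
    · rw [fm3_zero 4 16 n (by omega)]
      interval_cases n <;> norm_num [Pm]
    · rw [Pm_zero 3 6 n (by omega)]
      have := main3 (n+1) 4 16 n (by norm_num) (by omega)
      rw [if_neg (show ¬ n = 0 by omega), if_neg (show ¬ n = 3 by omega),
        if_neg (show ¬ n = 4 by omega), if_neg (show ¬ n = 9 by omega)]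
      omega
  · intro n
    have hcoeff : PowerSeries.coeff n (Fser 4 - (PowerSeries.X : PowerSeries ℤ) ^ 16
        + (PowerSeries.X : PowerSeries ℤ) ^ 18 + (PowerSeries.X : PowerSeries ℤ) ^ 30
        - (PowerSeries.X : PowerSeries ℤ) ^ 31)
        = cc 1 4 n - (if n = 16 then 1 else 0) + (if n = 18 then 1 else 0)
          + (if n = 30 then 1 else 0) - (if n = 31 then 1 else 0) := by
      rw [map_sub, map_add, map_add, map_sub, Fser_coeff, PowerSeries.coeff_X_pow,
        PowerSeries.coeff_X_pow, PowerSeries.coeff_X_pow, PowerSeries.coeff_X_pow]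
    simp only [Set.mem_insert_iff, Set.mem_singleton_iff]
    rw [hcoeff, cc14 n, fq4_rec 4 12 n (by norm_num),
      show (12:ℕ) + (3*4+1) = 25 from rfl, fq4_rec 5 25 n (by norm_num),
      show (25:ℕ) + (3*5+1) = 41 from rfl, fq4_rec 6 41 n (by norm_num),
      show (41:ℕ) + (3*6+1) = 60 from rfl, show fq4 (6+1) 60 n = fq4 7 60 n from rfl]
    rcases le_or_gt n 24 with h | h
    · rw [Qm_zero 5 25 n (by omega), Qm_zero 6 41 n (by omega), fq4_zero 7 60 n (by omega)]
      interval_cases n <;> norm_num [Qm]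
    rcases le_or_gt n 40 with h2 | h2
    · rw [Qm_zero 4 12 n (by omega), Qm_zero 6 41 n (by omega), fq4_zero 7 60 n (by omega)]
      interval_cases n <;> norm_num [Qm]
    rcases le_or_gt n 53 with h3 | h3
    · rw [Qm_zero 4 12 n (by omega), Qm_zero 5 25 n (by omega), fq4_zero 7 60 n (by omega)]
      have := Qm6_mem 41 n
      rw [if_neg (show ¬ n = 0 by omega), if_neg (show ¬ n = 4 by omega),
        if_neg (show ¬ n = 5 by omega), if_neg (show ¬ n = 8 by omega),
        if_neg (show ¬ n = 9 by omega), if_neg (show ¬ n = 10 by omega),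
        if_neg (show ¬ n = 11 by omega), if_neg (show ¬ n = 16 by omega),
        if_neg (show ¬ n = 18 by omega), if_neg (show ¬ n = 30 by omega),
        if_neg (show ¬ n = 31 by omega)]
      omega
    · rw [Qm_zero 4 12 n (by omega), Qm_zero 5 25 n (by omega), Qm_zero 6 41 n (by omega)]
      have := main4 (n+1) 7 60 n (by norm_num) (by omega)
      rw [if_neg (show ¬ n = 0 by omega), if_neg (show ¬ n = 4 by omega),
        if_neg (show ¬ n = 5 by omega), if_neg (show ¬ n = 8 by omega),
        if_neg (show ¬ n = 9 by omega), if_neg (show ¬ n = 10 by omega),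
        if_neg (show ¬ n = 11 by omega), if_neg (show ¬ n = 16 by omega),
        if_neg (show ¬ n = 18 by omega), if_neg (show ¬ n = 30 by omega),
        if_neg (show ¬ n = 31 by omega)]
      omega
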